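/- In the setting of the null-space identity: let M̂ = M + E be symmetric with M = UΛU^T of rank r, [U, U_⊥] orthogonal, M̂ û_j = λ̂_j û_j with û_j a unit vector, and suppose |λ_j| > 3‖E‖_op where λ_j is the j-th eigenvalue of M and |λ̂_j| ≥ |λ_j| − ‖E‖_op. Then λ̂_j I_{n−r} − U_⊥^T E U_⊥ is invertible, every eigenvalue of λ̂_j I_{n−r} − U_⊥^T E U_⊥ has absolute value at least |λ_j|/3, and consequently ‖û_j^T U_⊥‖ ≤ 3‖E‖_op/|λ_j|. -/

import Mathlib

open Matrix
open scoped Matrix.Norms.L2Operator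

/-- Invertibility, spectral lower bound and Davis–Kahan-type bound under `|λ_j| > 3‖E‖`. -/
theorem stmt_5 {n r s : ℕ} (M E : Matrix (Fin n) (Fin n) ℝ)
    (hM : M.IsSymm) (hE : E.IsSymm)
    (U : Matrix (Fin n) (Fin r) ℝ) (Lam : Matrix (Fin r) (Fin r) ℝ) (hLam : Lam.IsDiag)
    (Uperp : Matrix (Fin n) (Fin s) ℝ)
    (hMdecomp : M = U * Lam * Uᵀ)
    (hUU : Uᵀ * U = 1) (hUpUp : Uperpᵀ * Uperp = 1) (hUUp : Uᵀ * Uperp = 0)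
    (hcomplete : U * Uᵀ + Uperp * Uperpᵀ = 1)
    (uhat : Fin n → ℝ) (lamhat lamj : ℝ)
    (hunit : uhat ⬝ᵥ uhat = 1)
    (huhat : (M + E).mulVec uhat = lamhat • uhat)
    (hspec : lamj ∈ spectrum ℝ M)
    (hgap : 3 * ‖E‖ < |lamj|)
    (hweyl : |lamj| - ‖E‖ ≤ |lamhat|) :
    IsUnit (lamhat • (1 : Matrix (Fin s) (Fin s) ℝ) - Uperpᵀ * E * Uperp)
    ∧ (∀ μ ∈ spectrum ℝ (lamhat • (1 : Matrix (Fin s) (Fin s) ℝ) - Uperpᵀ * E * Uperp),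
        |lamj| / 3 ≤ |μ|)
    ∧ ‖(WithLp.equiv 2 (Fin s → ℝ)).symm (uhat ᵥ* Uperp)‖ ≤ 3 * ‖E‖ / |lamj| := by
  have hE0 : (0:ℝ) ≤ ‖E‖ := norm_nonneg E
  have hlj : (0:ℝ) < |lamj| := lt_of_le_of_lt (by positivity) hgap
  rcases Nat.eq_zero_or_pos s with hs | hs
  · subst hs
    haveI : Subsingleton (Matrix (Fin 0) (Fin 0) ℝ) := by
      constructor; intro a b; ext i j; exact absurd i.2 (by omega)
    refine ⟨isUnit_of_subsingleton _, ?_, ?_⟩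
    · intro μ hμ
      exact absurd (spectrum.notMem_iff.mpr (isUnit_of_subsingleton _)) (not_not.mpr hμ)
    · have hz : (WithLp.equiv 2 (Fin 0 → ℝ)).symm (uhat ᵥ* Uperp) = 0 := by
        ext i; exact absurd i.2 (by omega)
      rw [hz, norm_zero]
      positivity
  · haveI : Nonempty (Fin s) := ⟨⟨0, hs⟩⟩
    -- Norm bounds on the orthonormal blocks
    have honorm : ∀ {q : ℕ} (V : Matrix (Fin n) (Fin q) ℝ), Vᵀ * V = 1 → ‖V‖ ≤ 1 := by
      intro q V hV
      have h1 : ‖V‖ * ‖V‖ = ‖(1 : Matrix (Fin q) (Fin q) ℝ)‖ := by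
        rw [← Matrix.l2_opNorm_conjTranspose_mul_self,
          Matrix.conjTranspose_eq_transpose_of_trivial, hV]
      have h2 : ‖(1 : Matrix (Fin q) (Fin q) ℝ)‖ ≤ 1 := by
        rcases Nat.eq_zero_or_pos q with hq | hq
        · subst hq
          have : (1 : Matrix (Fin 0) (Fin 0) ℝ) = 0 := by
            ext i j; exact absurd i.2 (by omega)
          rw [this, norm_zero]; exact zero_le_one
        · haveI : Nonempty (Fin q) := ⟨⟨0, hq⟩⟩
          rw [CStarRing.norm_one]
      nlinarith [norm_nonneg V]
    have hUpn : ‖Uperp‖ ≤ 1 := honorm Uperp hUpUp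
    have hUn : ‖U‖ ≤ 1 := honorm U hUU
    have hUpTn : ‖Uperpᵀ‖ ≤ 1 := by
      rw [← Matrix.conjTranspose_eq_transpose_of_trivial, Matrix.l2_opNorm_conjTranspose]
      exact hUpn
    have hUTn : ‖Uᵀ‖ ≤ 1 := by
      rw [← Matrix.conjTranspose_eq_transpose_of_trivial, Matrix.l2_opNorm_conjTranspose]
      exact hUn
    have hsand : ∀ {p q : ℕ} (V : Matrix (Fin n) (Fin p) ℝ) (W : Matrix (Fin n) (Fin q) ℝ),
        ‖Vᵀ‖ ≤ 1 → ‖W‖ ≤ 1 → ‖Vᵀ * E * W‖ ≤ ‖E‖ := by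
      intro p q V W hV hW
      calc ‖Vᵀ * E * W‖ ≤ ‖Vᵀ * E‖ * ‖W‖ := Matrix.l2_opNorm_mul _ _
        _ ≤ ‖Vᵀ * E‖ * 1 := by
            exact mul_le_mul_of_nonneg_left hW (norm_nonneg _)
        _ = ‖Vᵀ * E‖ := mul_one _
        _ ≤ ‖Vᵀ‖ * ‖E‖ := Matrix.l2_opNorm_mul _ _
        _ ≤ 1 * ‖E‖ := mul_le_mul_of_nonneg_right hV hE0
        _ = ‖E‖ := one_mul _
    have hBn : ‖Uperpᵀ * E * Uperp‖ ≤ ‖E‖ := hsand Uperp Uperp hUpTn hUpn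
    -- Part 2: spectral lower bound
    have part2 : ∀ μ ∈ spectrum ℝ
        (lamhat • (1 : Matrix (Fin s) (Fin s) ℝ) - Uperpᵀ * E * Uperp), |lamj| / 3 ≤ |μ| := by
      intro μ hμ
      have halg : lamhat • (1 : Matrix (Fin s) (Fin s) ℝ)
          = algebraMap ℝ (Matrix (Fin s) (Fin s) ℝ) lamhat :=
        (Algebra.algebraMap_eq_smul_one lamhat).symm
      rw [halg] at hμ
      rw [← spectrum.singleton_sub_eq] at hμ
      obtain ⟨x, hx, ν, hν, hxν⟩ := hμ
      rw [Set.mem_singleton_iff] at hx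
      have hμ' : μ = lamhat - ν := by rw [← hxν, hx]
      have hνE : |ν| ≤ ‖E‖ := by
        have := spectrum.norm_le_norm_of_mem hν
        rw [Real.norm_eq_abs] at this
        exact this.trans hBn
      have habs : |lamhat| - |ν| ≤ |lamhat - ν| := abs_sub_abs_le_abs_sub _ _
      rw [hμ']
      linarith
    refine ⟨?_, part2, ?_⟩
    · rw [← spectrum.zero_notMem_iff (R := ℝ)]
      intro h0
      have := part2 0 h0
      rw [abs_zero] at this
      linarith
    · -- Part 3
      set w : Fin s → ℝ := Uperpᵀ *ᵥ uhat with hw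
      have hwv : uhat ᵥ* Uperp = w := (Matrix.mulVec_transpose Uperp uhat).symm
      set y : Fin r → ℝ := Uᵀ *ᵥ uhat with hy
      have hUpU : Uperpᵀ * U = 0 := by
        have := congrArg Matrix.transpose hUUp
        simpa [Matrix.transpose_mul] using this
      have hUpM : Uperpᵀ * M = 0 := by
        rw [hMdecomp, ← Matrix.mul_assoc, ← Matrix.mul_assoc, hUpU, Matrix.zero_mul,
          Matrix.zero_mul]
      have key : (lamhat • (1 : Matrix (Fin s) (Fin s) ℝ) - Uperpᵀ * E * Uperp) *ᵥ w
          = (Uperpᵀ * E * U) *ᵥ y := by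
        have h1 : (Uperpᵀ * E) *ᵥ uhat = lamhat • w := by
          have := congrArg (fun v => Uperpᵀ *ᵥ v) huhat
          simp only [Matrix.mulVec_mulVec, Matrix.mulVec_smul] at this
          rw [Matrix.mul_add, hUpM, zero_add] at this
          exact this
        have h2 : Uperpᵀ * E = Uperpᵀ * E * U * Uᵀ + (Uperpᵀ * E * Uperp) * Uperpᵀ := by
          calc Uperpᵀ * E = Uperpᵀ * E * 1 := (Matrix.mul_one _).symm
            _ = Uperpᵀ * E * (U * Uᵀ + Uperp * Uperpᵀ) := by rw [hcomplete]
            _ = Uperpᵀ * E * U * Uᵀ + (Uperpᵀ * E * Uperp) * Uperpᵀ := by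
                rw [Matrix.mul_add, ← Matrix.mul_assoc, ← Matrix.mul_assoc]
        have h3 : lamhat • w = (Uperpᵀ * E * U) *ᵥ y + (Uperpᵀ * E * Uperp) *ᵥ w := by
          rw [← h1]
          conv_lhs => rw [h2]
          simp [hw, hy, Matrix.add_mulVec, Matrix.mulVec_mulVec]
        rw [Matrix.sub_mulVec, Matrix.smul_mulVec, Matrix.one_mulVec, h3]
        abel
      -- norms
      set ew : EuclideanSpace ℝ (Fin s) := (WithLp.equiv 2 (Fin s → ℝ)).symm w with hew
      set ey : EuclideanSpace ℝ (Fin r) := (WithLp.equiv 2 (Fin r → ℝ)).symm y with hey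
      have huh1 : ‖(WithLp.equiv 2 (Fin n → ℝ)).symm uhat‖ = 1 := by
        rw [EuclideanSpace.norm_eq]
        have : ∑ i, ‖(WithLp.equiv 2 (Fin n → ℝ)).symm uhat i‖ ^ 2 = 1 := by
          rw [← hunit]
          simp [dotProduct, Real.norm_eq_abs, sq_abs, pow_two]
        rw [this, Real.sqrt_one]
      have hyn : ‖ey‖ ≤ 1 := by
        have := Matrix.l2_opNorm_mulVec Uᵀ ((WithLp.equiv 2 (Fin n → ℝ)).symm uhat)
        rw [huh1, mul_one] at this
        exact this.trans hUTn
      have hAw : ‖(WithLp.equiv 2 (Fin s → ℝ)).symm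
          ((lamhat • (1 : Matrix (Fin s) (Fin s) ℝ) - Uperpᵀ * E * Uperp) *ᵥ w)‖ ≤ ‖E‖ := by
        rw [key]
        have h4 := Matrix.l2_opNorm_mulVec (Uperpᵀ * E * U) ey
        have h5 : ‖Uperpᵀ * E * U‖ ≤ ‖E‖ := hsand Uperp U hUpTn hUn
        calc ‖(WithLp.equiv 2 (Fin s → ℝ)).symm ((Uperpᵀ * E * U) *ᵥ y)‖
            ≤ ‖Uperpᵀ * E * U‖ * ‖ey‖ := h4
          _ ≤ ‖E‖ * 1 := by
              apply mul_le_mul h5 hyn (norm_nonneg _) hE0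
          _ = ‖E‖ := mul_one _
      have hBw : ‖(WithLp.equiv 2 (Fin s → ℝ)).symm ((Uperpᵀ * E * Uperp) *ᵥ w)‖
          ≤ ‖E‖ * ‖ew‖ := by
        have h4 := Matrix.l2_opNorm_mulVec (Uperpᵀ * E * Uperp) ew
        exact h4.trans (mul_le_mul_of_nonneg_right hBn (norm_nonneg _))
      have hsplit : (WithLp.equiv 2 (Fin s → ℝ)).symm
          ((lamhat • (1 : Matrix (Fin s) (Fin s) ℝ) - Uperpᵀ * E * Uperp) *ᵥ w)
          = lamhat • ew - (WithLp.equiv 2 (Fin s → ℝ)).symm ((Uperpᵀ * E * Uperp) *ᵥ w) := by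
        rw [Matrix.sub_mulVec, Matrix.smul_mulVec, Matrix.one_mulVec,
          WithLp.equiv_symm_apply, WithLp.toLp_sub, WithLp.toLp_smul]
        rfl
      have hlow : (|lamj| / 3) * ‖ew‖ ≤ ‖(WithLp.equiv 2 (Fin s → ℝ)).symm
          ((lamhat • (1 : Matrix (Fin s) (Fin s) ℝ) - Uperpᵀ * E * Uperp) *ᵥ w)‖ := by
        have h6 : ‖lamhat • ew‖ - ‖(WithLp.equiv 2 (Fin s → ℝ)).symm
            ((Uperpᵀ * E * Uperp) *ᵥ w)‖ ≤ ‖(WithLp.equiv 2 (Fin s → ℝ)).symm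
            ((lamhat • (1 : Matrix (Fin s) (Fin s) ℝ) - Uperpᵀ * E * Uperp) *ᵥ w)‖ := by
          rw [hsplit]
          exact norm_sub_norm_le _ _
        rw [norm_smul, Real.norm_eq_abs] at h6
        have hewn : (0:ℝ) ≤ ‖ew‖ := norm_nonneg _
        nlinarith
      rw [hwv]
      rw [le_div_iff₀ hlj]
      have := le_trans hlow hAw
      show ‖ew‖ * |lamj| ≤ 3 * ‖E‖
      linarith
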